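/- For k ≥ 1 let J_k = ((k+1)^{−3(k+1)}, k^{−3k}] ⊂ (0,1], and let η be the measure on ℝ with density g with respect to Lebesgue measure, where g(x) = Σ_{k=1}^∞ |x|^{−3+1/k} · 1_{{|x| ∈ J_k}}(x). Then ∫_{{|x| ≤ 1}} |x|^2 dη(x) < ∞; in particular η satisfies the integrability condition defining a Lévy measure. -/

import Mathlib

open MeasureTheory ENNReal

/-- The density `g(x) = Σ_{k≥1} |x|^{−3+1/k} · 1_{|x| ∈ J_k}(x)`, where
`J_k = ((k+1)^{−3(k+1)}, k^{−3k}]`.  (The series over `k ≥ 1` is indexed by `k : ℕ`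
via `k ↦ k+1`.) -/
noncomputable def levyDensity (x : ℝ) : ℝ :=
  ∑' k : ℕ,
    if |x| ∈ Set.Ioc (((k : ℝ) + 2) ^ (-(3 : ℝ) * ((k : ℝ) + 2)))
        (((k : ℝ) + 1) ^ (-(3 : ℝ) * ((k : ℝ) + 1)))
    then |x| ^ ((-3 : ℝ) + 1 / ((k : ℝ) + 1)) else 0

/-- The measure `η` on `ℝ` with density `g` with respect to Lebesgue measure. -/
noncomputable def levyEta : Measure ℝ :=
  volume.withDensity fun x => ENNReal.ofReal (levyDensity x)

namespace LevyAux

noncomputable def aa (k : ℕ) : ℝ := ((k : ℝ) + 2) ^ (-(3 : ℝ) * ((k : ℝ) + 2))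
noncomputable def bb (k : ℕ) : ℝ := ((k : ℝ) + 1) ^ (-(3 : ℝ) * ((k : ℝ) + 1))

noncomputable def termR (k : ℕ) (x : ℝ) : ℝ :=
  if |x| ∈ Set.Ioc (aa k) (bb k) then |x| ^ ((-3 : ℝ) + 1 / ((k : ℝ) + 1)) else 0

noncomputable def qq (k : ℕ) : ℝ := (-1 : ℝ) + 1 / ((k : ℝ) + 1)

noncomputable def F (x : ℝ) : ℝ≥0∞ := ∑' k : ℕ, ENNReal.ofReal (termR k x)

lemma ha_pos (k : ℕ) : 0 < aa k := Real.rpow_pos_of_pos (by positivity) _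

lemma hb_pos (k : ℕ) : 0 < bb k := Real.rpow_pos_of_pos (by positivity) _

lemma hab (k : ℕ) : aa k ≤ bb k := by
  have h1 : aa k ≤ ((k : ℝ) + 2) ^ (-(3 : ℝ) * ((k : ℝ) + 1)) := by
    have hk0 : (0 : ℝ) ≤ (k : ℝ) := Nat.cast_nonneg k
    apply Real.rpow_le_rpow_of_exponent_le (by linarith)
    nlinarith
  have h2 : ((k : ℝ) + 2) ^ (-(3 : ℝ) * ((k : ℝ) + 1)) ≤ bb k := by
    have hk0 : (0 : ℝ) ≤ (k : ℝ) := Nat.cast_nonneg k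
    rw [bb, show (-(3 : ℝ) * ((k : ℝ) + 1)) = -((3 : ℝ) * ((k : ℝ) + 1)) by ring,
      Real.rpow_neg (by linarith), Real.rpow_neg (by linarith)]
    apply inv_anti₀ (Real.rpow_pos_of_pos (by linarith) _)
    exact Real.rpow_le_rpow (by linarith) (by linarith) (by nlinarith)
  exact h1.trans h2

lemma hq (k : ℕ) : (-1 : ℝ) < qq k := by
  have : (0 : ℝ) < 1 / ((k : ℝ) + 1) := by positivity
  rw [qq]; linarith

lemma hq1 (k : ℕ) : qq k + 1 = 1 / ((k : ℝ) + 1) := by rw [qq]; ring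

lemma meas_abs_rpow (c : ℝ) : Measurable fun x : ℝ => |x| ^ c := by
  have h : (fun x : ℝ => |x| ^ c)
      = fun x => if x = 0 then (0 : ℝ) ^ c else Real.exp (Real.log |x| * c) := by
    funext x
    split_ifs with h
    · simp [h]
    · rw [Real.rpow_def_of_pos (abs_pos.2 h)]
  rw [h]
  exact Measurable.ite (measurableSet_eq) measurable_const
    (Real.measurable_exp.comp ((Real.measurable_log.comp measurable_abs).mul_const c))

lemma meas_term (k : ℕ) : Measurable fun x : ℝ => ENNReal.ofReal (termR k x) := by
  apply Measurable.ennreal_ofReal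
  unfold termR
  exact Measurable.ite (measurable_abs measurableSet_Ioc) (meas_abs_rpow _) measurable_const

lemma hF_meas : Measurable F := Measurable.ennreal_tsum fun k => meas_term k

lemma h_ofReal_le (x : ℝ) : ENNReal.ofReal (levyDensity x) ≤ F x := by
  have hld : levyDensity x = ∑' k : ℕ, termR k x := rfl
  have hnn : ∀ k : ℕ, 0 ≤ termR k x := by
    intro k; rw [termR]
    split_ifs
    · exact Real.rpow_nonneg (abs_nonneg x) _
    · exact le_rfl
  by_cases h : Summable fun k => termR k x
  · rw [hld, ENNReal.ofReal_tsum_of_nonneg hnn h]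
    exact le_of_eq rfl
  · rw [hld, tsum_eq_zero_of_not_summable h]
    simp [F]

lemma int_Ioc (k : ℕ) :
    ∫⁻ x in Set.Ioc (aa k) (bb k), ENNReal.ofReal (|x| ^ qq k) ≤
      ENNReal.ofReal (1 / ((k : ℝ) + 1) ^ 2) := by
  have h1 : ∫⁻ x in Set.Ioc (aa k) (bb k), ENNReal.ofReal (|x| ^ qq k)
      = ∫⁻ x in Set.Ioc (aa k) (bb k), ENNReal.ofReal (x ^ qq k) := by
    apply setLIntegral_congr_fun measurableSet_Ioc
    exact fun x hx => by
      rw [abs_of_pos ((ha_pos k).trans hx.1)]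
  have hint : IntegrableOn (fun x => x ^ qq k) (Set.Ioc (aa k) (bb k)) volume :=
    (intervalIntegrable_iff_integrableOn_Ioc_of_le (hab k)).1
      (intervalIntegral.intervalIntegrable_rpow' (hq k))
  have hnn : 0 ≤ᵐ[volume.restrict (Set.Ioc (aa k) (bb k))] fun x => x ^ qq k := by
    rw [Filter.EventuallyLE, ae_restrict_iff' measurableSet_Ioc]
    exact Filter.Eventually.of_forall fun x hx =>
      Real.rpow_nonneg (((ha_pos k).trans hx.1)).le _
  rw [h1, ← ofReal_integral_eq_lintegral_ofReal hint hnn]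
  have h2 : ∫ x in Set.Ioc (aa k) (bb k), x ^ qq k
      = (bb k ^ (qq k + 1) - aa k ^ (qq k + 1)) / (qq k + 1) := by
    rw [← intervalIntegral.integral_of_le (hab k), integral_rpow (Or.inl (hq k))]
  rw [h2]
  apply ENNReal.ofReal_le_ofReal
  have hcpos : (0 : ℝ) < (k : ℝ) + 1 := by positivity
  have hbq : bb k ^ (qq k + 1) = 1 / ((k : ℝ) + 1) ^ 3 := by
    rw [bb, hq1, ← Real.rpow_mul (by positivity)]
    have he : -(3 : ℝ) * ((k : ℝ) + 1) * (1 / ((k : ℝ) + 1)) = -((3 : ℕ) : ℝ) := by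
      field_simp; norm_num
    rw [he, Real.rpow_neg (by positivity), Real.rpow_natCast, one_div]
  have hY : 0 ≤ aa k ^ (qq k + 1) := Real.rpow_nonneg (ha_pos k).le _
  rw [hbq]
  set Y := aa k ^ (qq k + 1) with hYdef
  rw [hq1, div_div_eq_mul_div, div_one]
  have h4 : (1 / ((k : ℝ) + 1) ^ 3 - Y) * ((k : ℝ) + 1)
      ≤ (1 / ((k : ℝ) + 1) ^ 3) * ((k : ℝ) + 1) :=
    mul_le_mul_of_nonneg_right (by linarith) hcpos.le
  have h5 : (1 / ((k : ℝ) + 1) ^ 3) * ((k : ℝ) + 1) = 1 / ((k : ℝ) + 1) ^ 2 := by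
    field_simp
  calc (1 / ((k : ℝ) + 1) ^ 3 - Y) * ((k : ℝ) + 1)
      ≤ (1 / ((k : ℝ) + 1) ^ 3) * ((k : ℝ) + 1) := h4
    _ = 1 / ((k : ℝ) + 1) ^ 2 := h5

lemma int_Ico (k : ℕ) :
    ∫⁻ x in Set.Ico (-(bb k)) (-(aa k)), ENNReal.ofReal (|x| ^ qq k)
      = ∫⁻ x in Set.Ioc (aa k) (bb k), ENNReal.ofReal (|x| ^ qq k) := by
  have A : MeasurableEmbedding fun x : ℝ => -x :=
    (Homeomorph.neg ℝ).measurableEmbedding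
  conv_lhs => rw [← Measure.map_neg_eq_self (volume : Measure ℝ)]
  rw [A.restrict_map, A.lintegral_map]
  have hpre : (fun x : ℝ => -x) ⁻¹' Set.Ico (-(bb k)) (-(aa k)) = Set.Ioc (aa k) (bb k) := by
    ext x
    simp only [Set.mem_preimage, Set.mem_Ico, Set.mem_Ioc]
    constructor
    · rintro ⟨h1, h2⟩; constructor <;> linarith
    · rintro ⟨h1, h2⟩; constructor <;> linarith
  rw [hpre]
  apply lintegral_congr fun x => ?_
  rw [abs_neg]

lemma lint_term (k : ℕ) :
    ∫⁻ x, ENNReal.ofReal (termR k x) * ENNReal.ofReal (|x| ^ (2 : ℝ))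
      ≤ 2 * ENNReal.ofReal (1 / ((k : ℝ) + 1) ^ 2) := by
  have hS : {x : ℝ | |x| ∈ Set.Ioc (aa k) (bb k)}
      = Set.Ioc (aa k) (bb k) ∪ Set.Ico (-(bb k)) (-(aa k)) := by
    ext x
    simp only [Set.mem_setOf_eq, Set.mem_Ioc, Set.mem_union, Set.mem_Ico]
    constructor
    · rintro ⟨h1, h2⟩
      rcases le_or_gt 0 x with hx | hx
      · left; rw [abs_of_nonneg hx] at h1 h2; exact ⟨h1, h2⟩
      · right; rw [abs_of_neg hx] at h1 h2; constructor <;> linarith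
    · rintro (⟨h1, h2⟩ | ⟨h1, h2⟩)
      · rw [abs_of_pos ((ha_pos k).trans h1)]; exact ⟨h1, h2⟩
      · have hx : x < 0 := by have := ha_pos k; linarith
        rw [abs_of_neg hx]; constructor <;> linarith
  have heq : ∀ x, ENNReal.ofReal (termR k x) * ENNReal.ofReal (|x| ^ (2 : ℝ))
      = Set.indicator {x : ℝ | |x| ∈ Set.Ioc (aa k) (bb k)}
          (fun x => ENNReal.ofReal (|x| ^ qq k)) x := by
    intro x
    by_cases hx : |x| ∈ Set.Ioc (aa k) (bb k)
    · rw [Set.indicator_of_mem (show x ∈ {x : ℝ | |x| ∈ Set.Ioc (aa k) (bb k)} from hx), termR, if_pos hx,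
        ← ENNReal.ofReal_mul (Real.rpow_nonneg (abs_nonneg x) _),
        ← Real.rpow_add ((ha_pos k).trans hx.1)]
      congr 1
      rw [qq]; ring_nf
    · rw [Set.indicator_of_notMem (show x ∉ {x : ℝ | |x| ∈ Set.Ioc (aa k) (bb k)} from hx), termR, if_neg hx]
      simp
  have hSmeas : MeasurableSet {x : ℝ | |x| ∈ Set.Ioc (aa k) (bb k)} :=
    measurable_abs measurableSet_Ioc
  have hdisj : Disjoint (Set.Ioc (aa k) (bb k)) (Set.Ico (-(bb k)) (-(aa k))) := by
    apply Set.disjoint_left.2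
    rintro x ⟨h1, _⟩ ⟨_, h4⟩
    have := ha_pos k
    linarith
  calc ∫⁻ x, ENNReal.ofReal (termR k x) * ENNReal.ofReal (|x| ^ (2 : ℝ))
      = ∫⁻ x, Set.indicator {x : ℝ | |x| ∈ Set.Ioc (aa k) (bb k)}
          (fun x => ENNReal.ofReal (|x| ^ qq k)) x := lintegral_congr heq
    _ = ∫⁻ x in {x : ℝ | |x| ∈ Set.Ioc (aa k) (bb k)}, ENNReal.ofReal (|x| ^ qq k) :=
        lintegral_indicator hSmeas _
    _ = (∫⁻ x in Set.Ioc (aa k) (bb k), ENNReal.ofReal (|x| ^ qq k))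
          + ∫⁻ x in Set.Ico (-(bb k)) (-(aa k)), ENNReal.ofReal (|x| ^ qq k) := by
        rw [hS, lintegral_union measurableSet_Ico hdisj]
    _ ≤ ENNReal.ofReal (1 / ((k : ℝ) + 1) ^ 2) + ENNReal.ofReal (1 / ((k : ℝ) + 1) ^ 2) :=
        add_le_add (int_Ioc k) (le_of_eq_of_le (int_Ico k) (int_Ioc k))
    _ = 2 * ENNReal.ofReal (1 / ((k : ℝ) + 1) ^ 2) := (two_mul _).symm

lemma key : (∫⁻ x, ENNReal.ofReal (|x| ^ (2 : ℝ)) ∂levyEta) < ⊤ := by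
  have hg : Measurable fun x : ℝ => ENNReal.ofReal (|x| ^ (2 : ℝ)) :=
    (meas_abs_rpow 2).ennreal_ofReal
  have hmono : levyEta ≤ volume.withDensity F :=
    withDensity_mono (Filter.Eventually.of_forall h_ofReal_le)
  refine lt_of_le_of_lt (lintegral_mono' hmono le_rfl) ?_
  rw [lintegral_withDensity_eq_lintegral_mul volume hF_meas hg]
  have hpt : ∀ x, (F * fun x => ENNReal.ofReal (|x| ^ (2 : ℝ))) x
      = ∑' k : ℕ, ENNReal.ofReal (termR k x) * ENNReal.ofReal (|x| ^ (2 : ℝ)) := by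
    intro x
    simp only [Pi.mul_apply, F]
    rw [ENNReal.tsum_mul_right]
  rw [lintegral_congr hpt,
    lintegral_tsum (f := fun k x => ENNReal.ofReal (termR k x) * ENNReal.ofReal (|x| ^ (2 : ℝ))) fun k => ((meas_term k).mul hg).aemeasurable]
  refine lt_of_le_of_lt (ENNReal.tsum_le_tsum fun k => lint_term k) ?_
  rw [ENNReal.tsum_mul_left]
  have hs : Summable fun k : ℕ => 1 / ((k : ℝ) + 1) ^ 2 := by
    have h0 : Summable fun n : ℕ => 1 / (n : ℝ) ^ 2 :=
      Real.summable_one_div_nat_pow.2 one_lt_two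
    have := (summable_nat_add_iff 1).2 h0
    simpa using this
  rw [← ENNReal.ofReal_tsum_of_nonneg (fun k => by positivity) hs]
  exact ENNReal.mul_lt_top (by norm_num) ENNReal.ofReal_lt_top

end LevyAux

/-- `∫_{|x|≤1} |x|² dη < ∞`; in particular `η` satisfies the integrability
condition `∫ (|x|² ∧ 1) dη < ∞` defining a Lévy measure. -/
theorem stmt_2 :
    (∫⁻ x in {x : ℝ | |x| ≤ 1}, ENNReal.ofReal (|x| ^ (2 : ℝ)) ∂levyEta) < ⊤ ∧
    (∫⁻ x, ENNReal.ofReal (min (|x| ^ (2 : ℝ)) 1) ∂levyEta) < ⊤ := by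
  constructor
  · exact lt_of_le_of_lt (setLIntegral_le_lintegral _ _) LevyAux.key
  · refine lt_of_le_of_lt (lintegral_mono fun x => ?_) LevyAux.key
    exact ENNReal.ofReal_le_ofReal (min_le_left _ _)
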